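/- arXiv:2507.06888 — 4 statements merged into one kernel-verified Lean document; each statement's English description precedes it below -/
import Mathlib

section
/- Let x_i = e_i and x_j = a·e_i + e_j with e_i, e_j independent, mean-zero, finite third moments. Define τ_{ij} = C_3(x_i)·C_{1,2}(x_i,x_j) − C_{2,1}(x_i,x_j)·C_{1,2}(x_j,x_i). Then τ_{ij} = 0. -/
open MeasureTheory ProbabilityTheory

/-- A measurable cube root on `ℝ`. -/
noncomputable def cbrt (y : ℝ) : ℝ := if y < 0 then -((-y) ^ ((1 : ℝ) / 3)) else y ^ ((1 : ℝ) / 3)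

lemma measurable_cbrt : Measurable cbrt := by
  unfold cbrt
  exact Measurable.ite (measurableSet_lt measurable_id measurable_const)
    ((measurable_id.neg.pow_const _).neg) (measurable_id.pow_const _)

lemma rpow_third {x : ℝ} (hx : 0 ≤ x) : (x ^ 3) ^ ((1 : ℝ) / 3) = x := by
  rw [← Real.rpow_natCast x 3, ← Real.rpow_mul hx]
  norm_num

lemma cbrt_cube (x : ℝ) : cbrt (x ^ 3) = x := by
  unfold cbrt
  rcases lt_or_ge x 0 with h | h
  · have h3 : x ^ 3 < 0 := Odd.pow_neg ⟨1, by norm_num⟩ h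
    rw [if_pos h3, show -(x ^ 3) = (-x) ^ 3 by ring, rpow_third (by linarith), neg_neg]
  · have h3 : ¬ x ^ 3 < 0 := not_lt.mpr (by positivity)
    rw [if_neg h3, rpow_third h]

/-- For `x_i = e_i`, `x_j = a e_i + e_j` with independent mean-zero noises,
`τ_{ij} = C₃(x_i) C_{1,2}(x_i,x_j) − C_{2,1}(x_i,x_j) C_{1,2}(x_j,x_i) = 0`. -/
theorem tau_ij_eq_zero {Ω : Type*} [MeasureSpace Ω] (μ : Measure Ω)
    [IsProbabilityMeasure μ] (eI eJ : Ω → ℝ) (a : ℝ)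
    (hindep : IndepFun eI eJ μ)
    (hmi : μ[eI] = 0) (hmj : μ[eJ] = 0)
    (hi3 : Integrable (eI ^ 3) μ) (hj3 : Integrable (eJ ^ 3) μ)
    (hij : Integrable (eI ^ 2 * eJ) μ) (hji : Integrable (eI * eJ ^ 2) μ)
    (xI xJ : Ω → ℝ) (hxI : xI = eI)
    (hxJ : ∀ ω, xJ ω = a * eI ω + eJ ω) :
    μ[xI ^ 3] * μ[xI * xJ ^ 2] - μ[xI ^ 2 * xJ] * μ[xJ * xI ^ 2] = 0 := by
  -- a.e.-measurability of eI and eJ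
  have hmeasI : AEStronglyMeasurable eI μ := by
    have : AEMeasurable (eI ^ 3) μ := hi3.aemeasurable
    have h : AEMeasurable (cbrt ∘ (eI ^ 3)) μ := measurable_cbrt.comp_aemeasurable this
    have he : cbrt ∘ (eI ^ 3) = eI := by
      funext ω; simp [Function.comp, cbrt_cube]
    rw [he] at h; exact h.aestronglyMeasurable
  have hmeasJ : AEStronglyMeasurable eJ μ := by
    have : AEMeasurable (eJ ^ 3) μ := hj3.aemeasurable
    have h : AEMeasurable (cbrt ∘ (eJ ^ 3)) μ := measurable_cbrt.comp_aemeasurable this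
    have he : cbrt ∘ (eJ ^ 3) = eJ := by
      funext ω; simp [Function.comp, cbrt_cube]
    rw [he] at h; exact h.aestronglyMeasurable
  -- cross moments vanish
  have hindep2 : IndepFun (eI ^ 2) eJ μ := by
    have := hindep.comp (φ := fun x : ℝ => x ^ 2) (ψ := id) (measurable_id.pow_const 2)
      measurable_id
    exact this
  have hindepJ2 : IndepFun eI (eJ ^ 2) μ := by
    have := hindep.comp (φ := id) (ψ := fun x : ℝ => x ^ 2) measurable_id
      (measurable_id.pow_const 2)
    exact this
  have hIJ : μ[eI ^ 2 * eJ] = 0 := by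
    rw [hindep2.integral_mul_eq_mul_integral (hmeasI.pow 2) hmeasJ, hmj, mul_zero]
  have hJI : μ[eI * eJ ^ 2] = 0 := by
    rw [hindepJ2.integral_mul_eq_mul_integral hmeasI (hmeasJ.pow 2), hmi, zero_mul]
  -- expand the moments
  have h1 : μ[xI ^ 3] = μ[eI ^ 3] := by rw [hxI]
  have h2 : μ[xI * xJ ^ 2] = a ^ 2 * μ[eI ^ 3] := by
    have heq : (xI * xJ ^ 2) = (a ^ 2) • (eI ^ 3) + (2 * a) • (eI ^ 2 * eJ)
        + (eI * eJ ^ 2) := by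
      funext ω
      simp only [Pi.add_apply, Pi.smul_apply, Pi.mul_apply, Pi.pow_apply, smul_eq_mul, hxI, hxJ ω]
      ring
    rw [heq]
    simp only [Pi.add_apply, Pi.smul_apply, smul_eq_mul]
    have hA : Integrable (fun x => a ^ 2 * (eI ^ 3) x + 2 * a * (eI ^ 2 * eJ) x) μ :=
      (hi3.const_mul _).add (hij.const_mul _)
    have hB : Integrable (fun x => a ^ 2 * (eI ^ 3) x) μ := hi3.const_mul _
    have hC : Integrable (fun x => 2 * a * (eI ^ 2 * eJ) x) μ := hij.const_mul _
    rw [integral_add hA hji, integral_add hB hC, integral_const_mul, integral_const_mul,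
      hIJ, hJI]
    ring
  have h3 : μ[xI ^ 2 * xJ] = a * μ[eI ^ 3] := by
    have heq : (xI ^ 2 * xJ) = a • (eI ^ 3) + (eI ^ 2 * eJ) := by
      funext ω
      simp only [Pi.add_apply, Pi.smul_apply, Pi.mul_apply, Pi.pow_apply, smul_eq_mul, hxI, hxJ ω]
      ring
    rw [heq]
    simp only [Pi.add_apply, Pi.smul_apply, smul_eq_mul]
    have hB : Integrable (fun x => a * (eI ^ 3) x) μ := hi3.const_mul _
    rw [integral_add hB hij, integral_const_mul, hIJ]
    ring
  have h4 : μ[xJ * xI ^ 2] = μ[xI ^ 2 * xJ] := by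
    congr 1; funext ω; simp [mul_comm]
  rw [h1, h2, h3, h4, h3]
  ring
end

section
/- Let x_i = e_i and x_j = a·e_i + e_j with e_i, e_j independent, mean-zero, finite third moments. Define τ_{ji} = C_3(x_j)·C_{1,2}(x_j,x_i) − C_{2,1}(x_j,x_i)·C_{1,2}(x_i,x_j). Then τ_{ji} = a·C_3(e_i)·C_3(e_j). In particular if a ≠ 0, C_3(e_i) ≠ 0, and C_3(e_j) ≠ 0, then τ_{ji} ≠ 0. -/
open MeasureTheory ProbabilityTheory

lemma sq_aesm {Ω : Type*} [MeasureSpace Ω] (μ : Measure Ω) (f : Ω → ℝ)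
    (h : AEStronglyMeasurable (f ^ 3) μ) : AEStronglyMeasurable (f ^ 2) μ := by
  have hc : Continuous (fun x : ℝ => |x| ^ ((2:ℝ)/3)) :=
    (Real.continuous_rpow_const (by norm_num)).comp continuous_abs
  have : (f ^ 2) = (fun x : ℝ => |x| ^ ((2:ℝ)/3)) ∘ (f ^ 3) := by
    funext ω
    simp only [Pi.pow_apply, Function.comp_apply]
    rw [abs_pow, ← Real.rpow_natCast |f ω| 3, ← Real.rpow_mul (abs_nonneg _)]
    norm_num
  rw [this]
  exact hc.comp_aestronglyMeasurable h

lemma self_aesm {Ω : Type*} [MeasureSpace Ω] (μ : Measure Ω) (f : Ω → ℝ)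
    (h : AEStronglyMeasurable (f ^ 3) μ) : AEStronglyMeasurable f μ := by
  have h2 := sq_aesm μ f h
  have : f = (f ^ 3) * (f ^ 2)⁻¹ := by
    funext ω
    simp only [Pi.mul_apply, Pi.inv_apply, Pi.pow_apply]
    rcases eq_or_ne (f ω) 0 with h0 | h0
    · simp [h0]
    · field_simp
  rw [this]
  exact (h.aemeasurable.mul h2.aemeasurable.inv).aestronglyMeasurable

/-- For `x_i = e_i`, `x_j = a e_i + e_j` with independent mean-zero noises,
`τ_{ji} = C₃(x_j) C_{1,2}(x_j,x_i) − C_{2,1}(x_j,x_i) C_{1,2}(x_i,x_j)`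
equals `a C₃(e_i) C₃(e_j)`; in particular it is nonzero when `a`, `C₃(e_i)`,
`C₃(e_j)` are nonzero. -/
theorem tau_ji_eq {Ω : Type*} [MeasureSpace Ω] (μ : Measure Ω)
    [IsProbabilityMeasure μ] (eI eJ : Ω → ℝ) (a : ℝ)
    (hindep : IndepFun eI eJ μ)
    (hmi : μ[eI] = 0) (hmj : μ[eJ] = 0)
    (hi3 : Integrable (eI ^ 3) μ) (hj3 : Integrable (eJ ^ 3) μ)
    (hij : Integrable (eI ^ 2 * eJ) μ) (hji : Integrable (eI * eJ ^ 2) μ)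
    (xI xJ : Ω → ℝ) (hxI : xI = eI)
    (hxJ : ∀ ω, xJ ω = a * eI ω + eJ ω) :
    μ[xJ ^ 3] * μ[xJ * xI ^ 2] - μ[xJ ^ 2 * xI] * μ[xI * xJ ^ 2]
        = a * μ[eI ^ 3] * μ[eJ ^ 3] ∧
      (a ≠ 0 → μ[eI ^ 3] ≠ 0 → μ[eJ ^ 3] ≠ 0 →
        μ[xJ ^ 3] * μ[xJ * xI ^ 2] - μ[xJ ^ 2 * xI] * μ[xI * xJ ^ 2] ≠ 0) := by
  have haeI : AEStronglyMeasurable eI μ := self_aesm μ eI hi3.1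
  have haeJ : AEStronglyMeasurable eJ μ := self_aesm μ eJ hj3.1
  have haeI2 : AEStronglyMeasurable (eI ^ 2) μ := sq_aesm μ eI hi3.1
  have haeJ2 : AEStronglyMeasurable (eJ ^ 2) μ := sq_aesm μ eJ hj3.1
  -- independence of squares
  have hindep2J : IndepFun (eI ^ 2) eJ μ := by
    have := hindep.comp (φ := fun x : ℝ => x ^ 2) (ψ := id)
      (measurable_id.pow_const 2) measurable_id
    exact this
  have hindepI2 : IndepFun eI (eJ ^ 2) μ := by
    have := hindep.comp (φ := id) (ψ := fun x : ℝ => x ^ 2)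
      measurable_id (measurable_id.pow_const 2)
    exact this
  have hE1 : μ[eI ^ 2 * eJ] = 0 := by
    rw [hindep2J.integral_mul_eq_mul_integral haeI2 haeJ, hmj, mul_zero]
  have hE2 : μ[eI * eJ ^ 2] = 0 := by
    rw [hindepI2.integral_mul_eq_mul_integral haeI haeJ2, hmi, zero_mul]
  set I3 := μ[eI ^ 3] with hI3
  set J3 := μ[eJ ^ 3] with hJ3
  -- expand xJ^3
  have hA : μ[xJ ^ 3] = a ^ 3 * I3 + J3 := by
    have e1 : (xJ ^ 3) = (fun ω => a ^ 3 * (eI ^ 3) ω) + ((fun ω => 3 * a ^ 2 * (eI ^ 2 * eJ) ω)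
        + ((fun ω => 3 * a * (eI * eJ ^ 2) ω) + eJ ^ 3)) := by
      funext ω
      simp only [Pi.pow_apply, Pi.mul_apply, Pi.add_apply, hxJ]
      ring
    rw [e1, integral_add' (hi3.const_mul _) ((hij.const_mul _).add ((hji.const_mul _).add hj3)),
      integral_add' (hij.const_mul _) ((hji.const_mul _).add hj3),
      integral_add' (hji.const_mul _) hj3, integral_const_mul, integral_const_mul,
      integral_const_mul, hE1, hE2]
    ring
  have hB : μ[xJ * xI ^ 2] = a * I3 := by
    have e1 : (xJ * xI ^ 2) = (fun ω => a * (eI ^ 3) ω) + (eI ^ 2 * eJ) := by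
      funext ω
      simp only [Pi.pow_apply, Pi.mul_apply, Pi.add_apply, hxJ, hxI]
      ring
    rw [e1, integral_add' (hi3.const_mul _) hij, integral_const_mul, hE1]
    ring
  have hC : μ[xJ ^ 2 * xI] = a ^ 2 * I3 := by
    have e1 : (xJ ^ 2 * xI) = (fun ω => a ^ 2 * (eI ^ 3) ω) + ((fun ω => 2 * a * (eI ^ 2 * eJ) ω)
        + (eI * eJ ^ 2)) := by
      funext ω
      simp only [Pi.pow_apply, Pi.mul_apply, Pi.add_apply, hxJ, hxI]
      ring
    rw [e1, integral_add' (hi3.const_mul _) ((hij.const_mul _).add hji),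
      integral_add' (hij.const_mul _) hji, integral_const_mul, integral_const_mul, hE1, hE2]
    ring
  have hD : μ[xI * xJ ^ 2] = a ^ 2 * I3 := by
    have e1 : (xI * xJ ^ 2) = (fun ω => a ^ 2 * (eI ^ 3) ω) + ((fun ω => 2 * a * (eI ^ 2 * eJ) ω)
        + (eI * eJ ^ 2)) := by
      funext ω
      simp only [Pi.pow_apply, Pi.mul_apply, Pi.add_apply, hxJ, hxI]
      ring
    rw [e1, integral_add' (hi3.const_mul _) ((hij.const_mul _).add hji),
      integral_add' (hij.const_mul _) hji, integral_const_mul, integral_const_mul, hE1, hE2]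
    ring
  have key : μ[xJ ^ 3] * μ[xJ * xI ^ 2] - μ[xJ ^ 2 * xI] * μ[xI * xJ ^ 2]
      = a * I3 * J3 := by
    rw [hA, hB, hC, hD]; ring
  refine ⟨key, fun ha hi hj => ?_⟩
  rw [key]
  exact mul_ne_zero (mul_ne_zero ha hi) hj
end

section
/- Chain structure cumulant computation: let x_i = e_i, x_j = b·x_i + e_j, x_k = c·x_j + e_k with e_i, e_j, e_k jointly independent, mean-zero, finite third moments. Then C_{2,1}(x_j, x_k) = c·(b^3·C_3(e_i) + C_3(e_j)) and C_{1,2}(x_j, x_k) = c^2·(b^3·C_3(e_i) + C_3(e_j)). -/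
open MeasureTheory ProbabilityTheory Filter

private lemma iIndepFun_ae_eq' {Ω ι : Type*} [MeasurableSpace Ω] {μ : Measure Ω}
    {β : ι → Type*} {m : ∀ i, MeasurableSpace (β i)} {f g : ∀ i, Ω → β i}
    (hf : iIndepFun f μ) (h : ∀ i, f i =ᵐ[μ] g i) : iIndepFun g μ := by
  rw [iIndepFun_iff_measure_inter_preimage_eq_mul] at hf ⊢
  intro S sets hsets
  have hae : ∀ i, (g i ⁻¹' sets i : Set Ω) =ᵐ[μ] (f i ⁻¹' sets i) :=
    fun i => ((h i).symm.preimage (sets i))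
  have h1 : (⋂ i ∈ S, g i ⁻¹' sets i) =ᵐ[μ] (⋂ i ∈ S, f i ⁻¹' sets i) :=
    EventuallyEq.biInter S.finite_toSet (fun i _ => hae i)
  rw [measure_congr h1, hf S hsets]
  exact Finset.prod_congr rfl fun i _ => (measure_congr (hae i)).symm

/-- Cumulants along the chain `x_i = e_i`, `x_j = b x_i + e_j`,
`x_k = c x_j + e_k`: `C_{2,1}(x_j,x_k) = c (b³ C₃(e_i) + C₃(e_j))` and
`C_{1,2}(x_j,x_k) = c² (b³ C₃(e_i) + C₃(e_j))`. -/
theorem chain_cumulants {Ω : Type*} [MeasureSpace Ω] (μ : Measure Ω)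
    [IsProbabilityMeasure μ] (eI eJ eK : Ω → ℝ) (b c : ℝ)
    (hindep : iIndepFun ![eI, eJ, eK] μ)
    (hmi : μ[eI] = 0) (hmj : μ[eJ] = 0) (hmk : μ[eK] = 0)
    (hint : ∀ f g h : Ω → ℝ, f ∈ [eI, eJ, eK] → g ∈ [eI, eJ, eK] →
      h ∈ [eI, eJ, eK] → Integrable (f * g * h) μ)
    (xI xJ xK : Ω → ℝ) (hxI : xI = eI)
    (hxJ : ∀ ω, xJ ω = b * xI ω + eJ ω)
    (hxK : ∀ ω, xK ω = c * xJ ω + eK ω) :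
    μ[xJ ^ 2 * xK] = c * (b ^ 3 * μ[eI ^ 3] + μ[eJ ^ 3]) ∧
      μ[xJ * xK ^ 2] = c ^ 2 * (b ^ 3 * μ[eI ^ 3] + μ[eJ ^ 3]) := by
  have memI : eI ∈ [eI, eJ, eK] := by simp
  have memJ : eJ ∈ [eI, eJ, eK] := by simp
  have memK : eK ∈ [eI, eJ, eK] := by simp
  -- a.e. measurability from integrability of cubes
  have hemb : MeasurableEmbedding (fun x : ℝ => x ^ 3) :=
    (continuous_pow 3).measurableEmbedding
      (Odd.strictMono_pow (by decide)).injective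
  have cube : ∀ e : Ω → ℝ, Integrable (e * e * e) μ → AEMeasurable e μ := by
    intro e he
    have h2 : AEMeasurable ((fun x : ℝ => x ^ 3) ∘ e) μ :=
      he.aemeasurable.congr (ae_of_all _ fun ω => by
        show e ω * e ω * e ω = e ω ^ 3; ring)
    exact hemb.aemeasurable_comp_iff.1 h2
  have hAI : AEMeasurable eI μ := cube eI (hint eI eI eI memI memI memI)
  have hAJ : AEMeasurable eJ μ := cube eJ (hint eJ eJ eJ memJ memJ memJ)
  have hAK : AEMeasurable eK μ := cube eK (hint eK eK eK memK memK memK)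
  -- pairwise independence
  have h01 : IndepFun eI eJ μ := hindep.indepFun (show (0 : Fin 3) ≠ 1 by decide)
  have h02 : IndepFun eI eK μ := hindep.indepFun (show (0 : Fin 3) ≠ 2 by decide)
  have h12 : IndepFun eJ eK μ := hindep.indepFun (show (1 : Fin 3) ≠ 2 by decide)
  -- zero lemmas for X²Y and XY²
  have pairZ : ∀ X Y : Ω → ℝ, IndepFun X Y μ → AEMeasurable X μ → AEMeasurable Y μ →
      (∫ ω, Y ω ∂μ) = 0 → (∫ ω, X ω * X ω * Y ω ∂μ) = 0 := by
    intro X Y hXY hX hY h0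
    have h1 : IndepFun (fun ω => X ω * X ω) Y μ :=
      hXY.comp (measurable_id.mul measurable_id) measurable_id
    have h2 : (∫ ω, X ω * X ω * Y ω ∂μ) = (∫ ω, X ω * X ω ∂μ) * ∫ ω, Y ω ∂μ :=
      h1.integral_fun_mul_eq_mul_integral ((hX.mul hX).aestronglyMeasurable) hY.aestronglyMeasurable
    rw [h2, h0, mul_zero]
  have pairZ' : ∀ X Y : Ω → ℝ, IndepFun X Y μ → AEMeasurable X μ → AEMeasurable Y μ →
      (∫ ω, X ω ∂μ) = 0 → (∫ ω, X ω * Y ω * Y ω ∂μ) = 0 := by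
    intro X Y hXY hX hY h0
    have h1 : IndepFun X (fun ω => Y ω * Y ω) μ :=
      hXY.comp measurable_id (measurable_id.mul measurable_id)
    have h2 : (∫ ω, X ω * (Y ω * Y ω) ∂μ) = (∫ ω, X ω ∂μ) * ∫ ω, Y ω * Y ω ∂μ :=
      h1.integral_fun_mul_eq_mul_integral hX.aestronglyMeasurable ((hY.mul hY).aestronglyMeasurable)
    have h3 : (∫ ω, X ω * Y ω * Y ω ∂μ) = ∫ ω, X ω * (Y ω * Y ω) ∂μ :=
      integral_congr_ae (ae_of_all _ fun ω => by ring)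
    rw [h3, h2, h0, zero_mul]
  have Z2 : (∫ ω, eI ω * eI ω * eJ ω ∂μ) = 0 := pairZ eI eJ h01 hAI hAJ hmj
  have Z3 : (∫ ω, eI ω * eI ω * eK ω ∂μ) = 0 := pairZ eI eK h02 hAI hAK hmk
  have Z4 : (∫ ω, eI ω * eJ ω * eJ ω ∂μ) = 0 := pairZ' eI eJ h01 hAI hAJ hmi
  have Z6 : (∫ ω, eI ω * eK ω * eK ω ∂μ) = 0 := pairZ' eI eK h02 hAI hAK hmi
  have Z8 : (∫ ω, eJ ω * eJ ω * eK ω ∂μ) = 0 := pairZ eJ eK h12 hAJ hAK hmk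
  have Z9 : (∫ ω, eJ ω * eK ω * eK ω ∂μ) = 0 := pairZ' eJ eK h12 hAJ hAK hmj
  -- triple product is zero, via measurable modifications
  have hA : ∀ i : Fin 3, AEMeasurable (![eI, eJ, eK] i) μ := by
    intro i; fin_cases i
    · exact hAI
    · exact hAJ
    · exact hAK
  let g : Fin 3 → Ω → ℝ := fun i => (hA i).mk _
  have hgm : ∀ i, Measurable (g i) := fun i => (hA i).measurable_mk
  have hge : ∀ i, ![eI, eJ, eK] i =ᵐ[μ] g i := fun i => (hA i).ae_eq_mk
  have hgindep : iIndepFun g μ := iIndepFun_ae_eq' hindep hge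
  have Z5 : (∫ ω, eI ω * eJ ω * eK ω ∂μ) = 0 := by
    have h1 : IndepFun (g 0 * g 1) (g 2) μ :=
      hgindep.indepFun_mul_left hgm 0 1 2 (by decide) (by decide)
    have h2 : IndepFun (g 0) (g 1) μ := hgindep.indepFun (by decide)
    have ha : (∫ ω, g 0 ω * g 1 ω * g 2 ω ∂μ) = (∫ ω, g 0 ω * g 1 ω ∂μ) * ∫ ω, g 2 ω ∂μ :=
      h1.integral_fun_mul_eq_mul_integral ((hgm 0).mul (hgm 1)).aestronglyMeasurable (hgm 2).aestronglyMeasurable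
    have hb : (∫ ω, g 0 ω * g 1 ω ∂μ) = (∫ ω, g 0 ω ∂μ) * ∫ ω, g 1 ω ∂μ :=
      h2.integral_fun_mul_eq_mul_integral (hgm 0).aestronglyMeasurable (hgm 1).aestronglyMeasurable
    have e2 : (∫ ω, g 2 ω ∂μ) = ∫ ω, eK ω ∂μ := integral_congr_ae (hge 2).symm
    have e3 : (fun ω => eI ω * eJ ω * eK ω) =ᵐ[μ] fun ω => g 0 ω * g 1 ω * g 2 ω := by
      filter_upwards [hge 0, hge 1, hge 2] with ω k0 k1 k2
      show eI ω * eJ ω * eK ω = g 0 ω * g 1 ω * g 2 ω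
      rw [← k0, ← k1, ← k2]
      simp
    rw [integral_congr_ae e3, ha, e2, hmk, mul_zero]
  -- cubes
  have cI : (∫ ω, eI ω * eI ω * eI ω ∂μ) = ∫ ω, eI ω ^ 3 ∂μ :=
    integral_congr_ae (ae_of_all _ fun ω => by ring)
  have cJ : (∫ ω, eJ ω * eJ ω * eJ ω ∂μ) = ∫ ω, eJ ω ^ 3 ∂μ :=
    integral_congr_ae (ae_of_all _ fun ω => by ring)
  -- integrability of scaled monomials
  have intM : ∀ (a : ℝ) (f g h : Ω → ℝ), f ∈ [eI, eJ, eK] → g ∈ [eI, eJ, eK] →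
      h ∈ [eI, eJ, eK] → Integrable (fun ω => a * (f ω * g ω * h ω)) μ :=
    fun a f g h hf hg hh => (hint f g h hf hg hh).const_mul a
  -- key linear-expansion lemma
  have key : ∀ a1 a2 a3 a4 a5 a6 a7 a8 a9 : ℝ,
      (∫ ω, (a1 * (eI ω * eI ω * eI ω) + a2 * (eI ω * eI ω * eJ ω)
        + a3 * (eI ω * eI ω * eK ω) + a4 * (eI ω * eJ ω * eJ ω)
        + a5 * (eI ω * eJ ω * eK ω) + a6 * (eI ω * eK ω * eK ω)
        + a7 * (eJ ω * eJ ω * eJ ω) + a8 * (eJ ω * eJ ω * eK ω)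
        + a9 * (eJ ω * eK ω * eK ω)) ∂μ)
      = a1 * (∫ ω, eI ω ^ 3 ∂μ) + a7 * ∫ ω, eJ ω ^ 3 ∂μ := by
    intro a1 a2 a3 a4 a5 a6 a7 a8 a9
    have i1 := intM a1 eI eI eI memI memI memI
    have i2 := intM a2 eI eI eJ memI memI memJ
    have i3 := intM a3 eI eI eK memI memI memK
    have i4 := intM a4 eI eJ eJ memI memJ memJ
    have i5 := intM a5 eI eJ eK memI memJ memK
    have i6 := intM a6 eI eK eK memI memK memK
    have i7 := intM a7 eJ eJ eJ memJ memJ memJ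
    have i8 := intM a8 eJ eJ eK memJ memJ memK
    have i9 := intM a9 eJ eK eK memJ memK memK
    have s2 : Integrable (fun ω => a1 * (eI ω * eI ω * eI ω)
        + a2 * (eI ω * eI ω * eJ ω)) μ := i1.add i2
    have s3 : Integrable (fun ω => a1 * (eI ω * eI ω * eI ω)
        + a2 * (eI ω * eI ω * eJ ω) + a3 * (eI ω * eI ω * eK ω)) μ := s2.add i3
    have s4 : Integrable (fun ω => a1 * (eI ω * eI ω * eI ω)
        + a2 * (eI ω * eI ω * eJ ω) + a3 * (eI ω * eI ω * eK ω)
        + a4 * (eI ω * eJ ω * eJ ω)) μ := s3.add i4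
    have s5 : Integrable (fun ω => a1 * (eI ω * eI ω * eI ω)
        + a2 * (eI ω * eI ω * eJ ω) + a3 * (eI ω * eI ω * eK ω)
        + a4 * (eI ω * eJ ω * eJ ω) + a5 * (eI ω * eJ ω * eK ω)) μ := s4.add i5
    have s6 : Integrable (fun ω => a1 * (eI ω * eI ω * eI ω)
        + a2 * (eI ω * eI ω * eJ ω) + a3 * (eI ω * eI ω * eK ω)
        + a4 * (eI ω * eJ ω * eJ ω) + a5 * (eI ω * eJ ω * eK ω)
        + a6 * (eI ω * eK ω * eK ω)) μ := s5.add i6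
    have s7 : Integrable (fun ω => a1 * (eI ω * eI ω * eI ω)
        + a2 * (eI ω * eI ω * eJ ω) + a3 * (eI ω * eI ω * eK ω)
        + a4 * (eI ω * eJ ω * eJ ω) + a5 * (eI ω * eJ ω * eK ω)
        + a6 * (eI ω * eK ω * eK ω) + a7 * (eJ ω * eJ ω * eJ ω)) μ := s6.add i7
    have s8 : Integrable (fun ω => a1 * (eI ω * eI ω * eI ω)
        + a2 * (eI ω * eI ω * eJ ω) + a3 * (eI ω * eI ω * eK ω)
        + a4 * (eI ω * eJ ω * eJ ω) + a5 * (eI ω * eJ ω * eK ω)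
        + a6 * (eI ω * eK ω * eK ω) + a7 * (eJ ω * eJ ω * eJ ω)
        + a8 * (eJ ω * eJ ω * eK ω)) μ := s7.add i8
    rw [integral_add s8 i9, integral_add s7 i8, integral_add s6 i7,
      integral_add s5 i6, integral_add s4 i5, integral_add s3 i4,
      integral_add s2 i3, integral_add i1 i2]
    simp only [integral_const_mul]
    rw [cI, cJ, Z2, Z3, Z4, Z5, Z6, Z8, Z9]
    ring
  -- pointwise forms of xJ, xK
  have hxJ' : ∀ ω, xJ ω = b * eI ω + eJ ω := fun ω => by rw [hxJ, hxI]
  have hxK' : ∀ ω, xK ω = c * b * eI ω + c * eJ ω + eK ω := fun ω => by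
    rw [hxK, hxJ ω, hxI]; ring
  simp only [Pi.mul_apply, Pi.pow_apply]
  constructor
  · have p1 : (∫ ω, xJ ω ^ 2 * xK ω ∂μ)
        = ∫ ω, ((c * b ^ 3) * (eI ω * eI ω * eI ω)
          + (3 * c * b ^ 2) * (eI ω * eI ω * eJ ω) + (b ^ 2) * (eI ω * eI ω * eK ω)
          + (3 * c * b) * (eI ω * eJ ω * eJ ω) + (2 * b) * (eI ω * eJ ω * eK ω)
          + 0 * (eI ω * eK ω * eK ω) + c * (eJ ω * eJ ω * eJ ω)
          + 1 * (eJ ω * eJ ω * eK ω) + 0 * (eJ ω * eK ω * eK ω)) ∂μ :=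
      integral_congr_ae (ae_of_all _ fun ω => by simp only [hxJ', hxK']; ring)
    rw [p1, key (c * b ^ 3) (3 * c * b ^ 2) (b ^ 2) (3 * c * b) (2 * b) 0 c 1 0]
    ring
  · have p2 : (∫ ω, xJ ω * xK ω ^ 2 ∂μ)
        = ∫ ω, ((c ^ 2 * b ^ 3) * (eI ω * eI ω * eI ω)
          + (3 * c ^ 2 * b ^ 2) * (eI ω * eI ω * eJ ω)
          + (2 * c * b ^ 2) * (eI ω * eI ω * eK ω)
          + (3 * c ^ 2 * b) * (eI ω * eJ ω * eJ ω)
          + (4 * c * b) * (eI ω * eJ ω * eK ω) + b * (eI ω * eK ω * eK ω)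
          + (c ^ 2) * (eJ ω * eJ ω * eJ ω) + (2 * c) * (eJ ω * eJ ω * eK ω)
          + 1 * (eJ ω * eK ω * eK ω)) ∂μ :=
      integral_congr_ae (ae_of_all _ fun ω => by simp only [hxJ', hxK']; ring)
    rw [p2, key (c ^ 2 * b ^ 3) (3 * c ^ 2 * b ^ 2) (2 * c * b ^ 2) (3 * c ^ 2 * b)
      (4 * c * b) b (c ^ 2) (2 * c) 1]
    ring
end

section
/- In the chain x_i → x_j → x_k (x_i = e_i, x_j = b·x_i + e_j, x_k = c·x_j + e_k, noises independent mean-zero with nonzero third moments, b ≠ 0), τ_{ij} = C_3(x_i)·C_{1,2}(x_i,x_j) − C_{2,1}(x_i,x_j)·C_{1,2}(x_j,x_i) = 0 and τ_{ik} = C_3(x_i)·C_{1,2}(x_i,x_k) − C_{2,1}(x_i,x_k)·C_{1,2}(x_k,x_i) = 0, so the source x_i satisfies τ_{ij} = 0 against all descendants. -/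
open MeasureTheory ProbabilityTheory

/-- A measurable left inverse of the cube map on `ℝ`. -/
lemma exists_measurable_cbrt : ∃ g : ℝ → ℝ, Measurable g ∧ ∀ x : ℝ, g (x ^ 3) = x := by
  refine ⟨fun y => if 0 ≤ y then y ^ ((3:ℕ):ℝ)⁻¹ else -((-y) ^ ((3:ℕ):ℝ)⁻¹), ?_, ?_⟩
  · apply Measurable.ite (measurableSet_le measurable_const measurable_id)
    · exact (Real.continuous_rpow_const (by positivity)).measurable
    · exact ((Real.continuous_rpow_const (by positivity)).comp continuous_neg).measurable.neg
  · intro x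
    rcases le_or_gt 0 x with hx | hx
    · have hx3 : 0 ≤ x ^ 3 := by positivity
      simp only [if_pos hx3]
      exact Real.pow_rpow_inv_natCast hx (by norm_num)
    · have hx3 : ¬ (0 ≤ x ^ 3) := by
        simpa using (Odd.pow_neg ⟨1, by norm_num⟩ hx).not_ge
      simp only [if_neg hx3]
      have hneg : -(x ^ 3) = (-x) ^ 3 := by ring
      rw [hneg, Real.pow_rpow_inv_natCast (by linarith) (by norm_num), neg_neg]

/-- Linearity helper: if `X` agrees a.e. with a linear combination of six integrable
functions, its integral is the corresponding combination of integrals. -/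
lemma integral_eq_of_ae_sum {Ω : Type*} [MeasureSpace Ω] (μ : Measure Ω)
    (g1 g2 g3 g4 g5 g6 : Ω → ℝ)
    (h1 : Integrable g1 μ) (h2 : Integrable g2 μ) (h3 : Integrable g3 μ)
    (h4 : Integrable g4 μ) (h5 : Integrable g5 μ) (h6 : Integrable g6 μ)
    (a1 a2 a3 a4 a5 a6 : ℝ) (X : Ω → ℝ)
    (hX : ∀ᵐ ω ∂μ, X ω = a1 * g1 ω + a2 * g2 ω + a3 * g3 ω
      + a4 * g4 ω + a5 * g5 ω + a6 * g6 ω) :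
    μ[X] = a1 * μ[g1] + a2 * μ[g2] + a3 * μ[g3]
      + a4 * μ[g4] + a5 * μ[g5] + a6 * μ[g6] := by
  have hX' : X =ᵐ[μ] fun ω => ∑ i : Fin 6,
      ![a1, a2, a3, a4, a5, a6] i * ![g1, g2, g3, g4, g5, g6] i ω := by
    filter_upwards [hX] with ω h
    simp only [Fin.sum_univ_succ, Fin.sum_univ_zero, Matrix.cons_val_zero, Matrix.cons_val_succ]
    rw [h]; ring
  rw [integral_congr_ae hX', integral_finset_sum]
  · simp only [Fin.sum_univ_succ, Fin.sum_univ_zero, Matrix.cons_val_zero, Matrix.cons_val_succ,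
      integral_const_mul, add_zero]
    ring
  · intro i _
    fin_cases i
    · simpa using h1.const_mul a1
    · simpa using h2.const_mul a2
    · simpa using h3.const_mul a3
    · simpa using h4.const_mul a4
    · simpa using h5.const_mul a5
    · simpa using h6.const_mul a6

/-- Transferring `iIndepFun` along a.e. equality, for a triple. -/
lemma iIndepFun_ae_triple {Ω : Type*} [MeasureSpace Ω] {μ : Measure Ω}
    {eI eJ eK fI fJ fK : Ω → ℝ}
    (hI : eI =ᵐ[μ] fI) (hJ : eJ =ᵐ[μ] fJ) (hK : eK =ᵐ[μ] fK)
    (h : iIndepFun ![eI, eJ, eK] μ) :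
    iIndepFun ![fI, fJ, fK] μ := by
  rw [iIndepFun_iff_measure_inter_preimage_eq_mul] at h ⊢
  intro S sets hsets
  have hall : ∀ᵐ ω ∂μ, ∀ i : Fin 3, ![eI, eJ, eK] i ω = ![fI, fJ, fK] i ω := by
    rw [ae_all_iff]
    intro i
    fin_cases i
    · simp; exact hI
    · simp; exact hJ
    · simp; exact hK
  have h1 : μ (⋂ i ∈ S, ![fI, fJ, fK] i ⁻¹' sets i)
      = μ (⋂ i ∈ S, ![eI, eJ, eK] i ⁻¹' sets i) := by
    apply measure_congr
    filter_upwards [hall] with ω hω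
    change (ω ∈ ⋂ i ∈ S, _) = (ω ∈ ⋂ i ∈ S, _)
    simp only [Set.mem_iInter, Set.mem_preimage, eq_iff_iff]
    constructor
    · intro hmem i hi; rw [hω i]; exact hmem i hi
    · intro hmem i hi; rw [← hω i]; exact hmem i hi
  have h2 : ∀ i ∈ S, μ (![fI, fJ, fK] i ⁻¹' sets i)
      = μ (![eI, eJ, eK] i ⁻¹' sets i) := by
    intro i _
    apply measure_congr
    filter_upwards [hall] with ω hω
    change (_ ∈ _ ⁻¹' _) = (_ ∈ _ ⁻¹' _)
    simp only [Set.mem_preimage, hω i]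
  rw [h1, h S hsets]
  exact Finset.prod_congr rfl fun i hi => (h2 i hi).symm

/-- In the chain `x_i → x_j → x_k`, the source `x_i` satisfies the source
criterion against all descendants: `τ_{ij} = 0` and `τ_{ik} = 0`. -/
theorem chain_source_tau_zero {Ω : Type*} [MeasureSpace Ω] (μ : Measure Ω)
    [IsProbabilityMeasure μ] (eI eJ eK : Ω → ℝ) (b c : ℝ) (hb : b ≠ 0)
    (hindep : iIndepFun ![eI, eJ, eK] μ)
    (hmi : μ[eI] = 0) (hmj : μ[eJ] = 0) (hmk : μ[eK] = 0)
    (hc3i : μ[eI ^ 3] ≠ 0) (hc3j : μ[eJ ^ 3] ≠ 0) (hc3k : μ[eK ^ 3] ≠ 0)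
    (hint : ∀ f g h : Ω → ℝ, f ∈ [eI, eJ, eK] → g ∈ [eI, eJ, eK] →
      h ∈ [eI, eJ, eK] → Integrable (f * g * h) μ)
    (xI xJ xK : Ω → ℝ) (hxI : xI = eI)
    (hxJ : ∀ ω, xJ ω = b * xI ω + eJ ω)
    (hxK : ∀ ω, xK ω = c * xJ ω + eK ω) :
    μ[xI ^ 3] * μ[xI * xJ ^ 2] - μ[xI ^ 2 * xJ] * μ[xJ * xI ^ 2] = 0 ∧
      μ[xI ^ 3] * μ[xI * xK ^ 2] - μ[xI ^ 2 * xK] * μ[xK * xI ^ 2] = 0 := by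
  subst hxI
  obtain ⟨r, hrm, hr⟩ := exists_measurable_cbrt
  -- a.e. measurability of the noises
  have key_ae : ∀ e : Ω → ℝ, e ∈ [xI, eJ, eK] → AEMeasurable e μ := by
    intro e he
    have hcube : AEMeasurable (fun ω => (e ω) ^ 3) μ := by
      have h1 : AEStronglyMeasurable (e * e * e) μ :=
        (hint e e e he he he).aestronglyMeasurable
      have h2 : AEStronglyMeasurable (fun ω => (e ω) ^ 3) μ := by
        have : (e * e * e) = fun ω => (e ω) ^ 3 := by funext ω; simp [Pi.mul_apply]; ring
        rwa [this] at h1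
      exact h2.aemeasurable
    have : AEMeasurable (fun ω => r ((e ω) ^ 3)) μ := hrm.comp_aemeasurable hcube
    have he' : (fun ω => r ((e ω) ^ 3)) = e := by funext ω; exact hr (e ω)
    rwa [he'] at this
  have haeI := key_ae xI (by simp)
  have haeJ := key_ae eJ (by simp)
  have haeK := key_ae eK (by simp)
  set fI := haeI.mk xI with hfIdef
  set fJ := haeJ.mk eJ with hfJdef
  set fK := haeK.mk eK with hfKdef
  have hmI : Measurable fI := haeI.measurable_mk
  have hmJ : Measurable fJ := haeJ.measurable_mk
  have hmK : Measurable fK := haeK.measurable_mk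
  have heqI : xI =ᵐ[μ] fI := haeI.ae_eq_mk
  have heqJ : eJ =ᵐ[μ] fJ := haeJ.ae_eq_mk
  have heqK : eK =ᵐ[μ] fK := haeK.ae_eq_mk
  have hindep' : iIndepFun ![fI, fJ, fK] μ :=
    iIndepFun_ae_triple heqI heqJ heqK hindep
  -- pairwise and triple independence
  have h01 : IndepFun fI fJ μ := by
    simpa using hindep'.indepFun (show (0 : Fin 3) ≠ 1 by decide)
  have h02 : IndepFun fI fK μ := by
    simpa using hindep'.indepFun (show (0 : Fin 3) ≠ 2 by decide)
  have hmeas3 : ∀ i : Fin 3, Measurable (![fI, fJ, fK] i) := by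
    intro i; fin_cases i
    · exact hmI
    · exact hmJ
    · exact hmK
  have h012 : IndepFun (fI * fJ) fK μ := by
    simpa using hindep'.indepFun_mul_left hmeas3 0 1 2 (by decide) (by decide)
  -- integrability of the six basic products
  have hInt1 : Integrable (fun ω => fI ω ^ 3) μ := by
    refine (hint xI xI xI (by simp) (by simp) (by simp)).congr ?_
    filter_upwards [heqI] with ω h; simp only [Pi.mul_apply]; rw [h]; ring
  have hInt2 : Integrable (fun ω => fI ω ^ 2 * fJ ω) μ := by
    refine (hint xI xI eJ (by simp) (by simp) (by simp)).congr ?_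
    filter_upwards [heqI, heqJ] with ω h h'; simp only [Pi.mul_apply]; rw [h, h']; ring
  have hInt3 : Integrable (fun ω => fI ω * fJ ω ^ 2) μ := by
    refine (hint xI eJ eJ (by simp) (by simp) (by simp)).congr ?_
    filter_upwards [heqI, heqJ] with ω h h'; simp only [Pi.mul_apply]; rw [h, h']; ring
  have hInt4 : Integrable (fun ω => fI ω ^ 2 * fK ω) μ := by
    refine (hint xI xI eK (by simp) (by simp) (by simp)).congr ?_
    filter_upwards [heqI, heqK] with ω h h'; simp only [Pi.mul_apply]; rw [h, h']; ring
  have hInt5 : Integrable (fun ω => fI ω * fK ω ^ 2) μ := by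
    refine (hint xI eK eK (by simp) (by simp) (by simp)).congr ?_
    filter_upwards [heqI, heqK] with ω h h'; simp only [Pi.mul_apply]; rw [h, h']; ring
  have hInt6 : Integrable (fun ω => fI ω * fJ ω * fK ω) μ := by
    refine (hint xI eJ eK (by simp) (by simp) (by simp)).congr ?_
    filter_upwards [heqI, heqJ, heqK] with ω h h' h''
    simp only [Pi.mul_apply]; rw [h, h', h'']
  -- means of the modified noises
  have hEI : μ[fI] = 0 := by rw [← integral_congr_ae heqI]; exact hmi
  have hEJ : μ[fJ] = 0 := by rw [← integral_congr_ae heqJ]; exact hmj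
  have hEK : μ[fK] = 0 := by rw [← integral_congr_ae heqK]; exact hmk
  -- vanishing mixed moments
  have hv2 : ∫ ω, fI ω ^ 2 * fJ ω ∂μ = 0 := by
    have hind : IndepFun (fun ω => fI ω ^ 2) fJ μ :=
      h01.comp (measurable_id.pow_const 2) measurable_id
    have h := hind.integral_mul_eq_mul_integral (hmI.pow_const 2).aestronglyMeasurable
      hmJ.aestronglyMeasurable
    rw [hEJ, mul_zero] at h
    exact h
  have hv3 : ∫ ω, fI ω * fJ ω ^ 2 ∂μ = 0 := by
    have hind : IndepFun fI (fun ω => fJ ω ^ 2) μ :=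
      h01.comp measurable_id (measurable_id.pow_const 2)
    have h := hind.integral_mul_eq_mul_integral hmI.aestronglyMeasurable
      (hmJ.pow_const 2).aestronglyMeasurable
    rw [hEI, zero_mul] at h
    exact h
  have hv4 : ∫ ω, fI ω ^ 2 * fK ω ∂μ = 0 := by
    have hind : IndepFun (fun ω => fI ω ^ 2) fK μ :=
      h02.comp (measurable_id.pow_const 2) measurable_id
    have h := hind.integral_mul_eq_mul_integral (hmI.pow_const 2).aestronglyMeasurable
      hmK.aestronglyMeasurable
    rw [hEK, mul_zero] at h
    exact h
  have hv5 : ∫ ω, fI ω * fK ω ^ 2 ∂μ = 0 := by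
    have hind : IndepFun fI (fun ω => fK ω ^ 2) μ :=
      h02.comp measurable_id (measurable_id.pow_const 2)
    have h := hind.integral_mul_eq_mul_integral hmI.aestronglyMeasurable
      (hmK.pow_const 2).aestronglyMeasurable
    rw [hEI, zero_mul] at h
    exact h
  have hv6 : ∫ ω, fI ω * fJ ω * fK ω ∂μ = 0 := by
    have h := h012.integral_mul_eq_mul_integral (hmI.mul hmJ).aestronglyMeasurable
      hmK.aestronglyMeasurable
    rw [hEK, mul_zero] at h
    exact h
  -- the master evaluation
  have EV : ∀ (X : Ω → ℝ) (a1 a2 a3 a4 a5 a6 : ℝ),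
      (∀ᵐ ω ∂μ, X ω = a1 * fI ω ^ 3 + a2 * (fI ω ^ 2 * fJ ω) + a3 * (fI ω * fJ ω ^ 2)
        + a4 * (fI ω ^ 2 * fK ω) + a5 * (fI ω * fK ω ^ 2) + a6 * (fI ω * fJ ω * fK ω)) →
      μ[X] = a1 * ∫ ω, fI ω ^ 3 ∂μ := by
    intro X a1 a2 a3 a4 a5 a6 hae
    have h := integral_eq_of_ae_sum μ (fun ω => fI ω ^ 3) (fun ω => fI ω ^ 2 * fJ ω)
      (fun ω => fI ω * fJ ω ^ 2) (fun ω => fI ω ^ 2 * fK ω) (fun ω => fI ω * fK ω ^ 2)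
      (fun ω => fI ω * fJ ω * fK ω) hInt1 hInt2 hInt3 hInt4 hInt5 hInt6
      a1 a2 a3 a4 a5 a6 X hae
    rw [hv2, hv3, hv4, hv5, hv6] at h
    rw [h]; ring
  -- the seven moments appearing in the goal
  have e1 : μ[xI ^ 3] = 1 * ∫ ω, fI ω ^ 3 ∂μ := by
    refine EV _ 1 0 0 0 0 0 ?_
    filter_upwards [heqI] with ω h
    simp only [Pi.pow_apply]; rw [h]; ring
  have e2 : μ[xI * xJ ^ 2] = b ^ 2 * ∫ ω, fI ω ^ 3 ∂μ := by
    refine EV _ (b ^ 2) (2 * b) 1 0 0 0 ?_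
    filter_upwards [heqI, heqJ] with ω h h'
    simp only [Pi.mul_apply, Pi.pow_apply]; rw [hxJ ω, h, h']; ring
  have e3 : μ[xI ^ 2 * xJ] = b * ∫ ω, fI ω ^ 3 ∂μ := by
    refine EV _ b 1 0 0 0 0 ?_
    filter_upwards [heqI, heqJ] with ω h h'
    simp only [Pi.mul_apply, Pi.pow_apply]; rw [hxJ ω, h, h']; ring
  have e4 : μ[xJ * xI ^ 2] = b * ∫ ω, fI ω ^ 3 ∂μ := by
    refine EV _ b 1 0 0 0 0 ?_
    filter_upwards [heqI, heqJ] with ω h h'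
    simp only [Pi.mul_apply, Pi.pow_apply]; rw [hxJ ω, h, h']; ring
  have e5 : μ[xI * xK ^ 2] = (c * b) ^ 2 * ∫ ω, fI ω ^ 3 ∂μ := by
    refine EV _ ((c * b) ^ 2) (2 * c ^ 2 * b) (c ^ 2) (2 * c * b) 1 (2 * c) ?_
    filter_upwards [heqI, heqJ, heqK] with ω h h' h''
    simp only [Pi.mul_apply, Pi.pow_apply]; rw [hxK ω, hxJ ω, h, h', h'']; ring
  have e6 : μ[xI ^ 2 * xK] = c * b * ∫ ω, fI ω ^ 3 ∂μ := by
    refine EV _ (c * b) c 0 1 0 0 ?_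
    filter_upwards [heqI, heqJ, heqK] with ω h h' h''
    simp only [Pi.mul_apply, Pi.pow_apply]; rw [hxK ω, hxJ ω, h, h', h'']; ring
  have e7 : μ[xK * xI ^ 2] = c * b * ∫ ω, fI ω ^ 3 ∂μ := by
    refine EV _ (c * b) c 0 1 0 0 ?_
    filter_upwards [heqI, heqJ, heqK] with ω h h' h''
    simp only [Pi.mul_apply, Pi.pow_apply]; rw [hxK ω, hxJ ω, h, h', h'']; ring
  rw [e1, e2, e3, e4, e5, e6, e7]
  constructor <;> ring
end
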